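/- Let H be a nonempty finite type, z : H → ℝ with z i ∈ {0,1} for all i and z i₀ = 1 for some i₀, and c : H × H → ℝ. Let P be the set of all X : H × H → ℝ with X i j ≥ 0 for all i, j; Σ_{i,j} X i j = 1; and for every i, Σ_j X i j + Σ_{j ≠ i} X j i ≤ z i. Then there exists X* ∈ P taking values only in {0,1} such that Σ_{i,j} c i j · X* i j ≤ Σ_{i,j} c i j · X i j for every X ∈ P. -/
import Mathlib


theorem stmt_8 {H : Type*} [Fintype H] [Nonempty H] [DecidableEq H]
    (z : H → ℝ) (hz : ∀ i, z i ∈ ({0, 1} : Set ℝ))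
    (i₀ : H) (hz₀ : z i₀ = 1) (c : H × H → ℝ)
    (P : Set (H × H → ℝ))
    (hP : P = {X | (∀ i j, 0 ≤ X (i, j)) ∧
      (∑ i : H, ∑ j : H, X (i, j) = 1) ∧
      (∀ i, (∑ j : H, X (i, j)) + (∑ j ∈ Finset.univ.erase i, X (j, i)) ≤ z i)}) :
    ∃ Xstar ∈ P, (∀ i j, Xstar (i, j) ∈ ({0, 1} : Set ℝ)) ∧
      ∀ X ∈ P, ∑ i : H, ∑ j : H, c (i, j) * Xstar (i, j) ≤
        ∑ i : H, ∑ j : H, c (i, j) * X (i, j) := by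
  classical
  -- the set of pairs where both endpoints are hubs
  set S : Finset (H × H) := Finset.univ.filter (fun p => z p.1 = 1 ∧ z p.2 = 1) with hS
  have hSne : S.Nonempty := ⟨(i₀, i₀), by simp [hS, hz₀]⟩
  obtain ⟨p₀, hp₀S, hp₀min⟩ := S.exists_min_image c hSne
  obtain ⟨a, b⟩ := p₀
  have hab : z a = 1 ∧ z b = 1 := by
    simpa [hS] using hp₀S
  set Xstar : H × H → ℝ := fun p => if p = (a, b) then 1 else 0 with hX
  have hzge : ∀ i, 0 ≤ z i := by
    intro i
    have h := hz i
    simp only [Set.mem_insert_iff, Set.mem_singleton_iff] at h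
    rcases h with h | h <;> rw [h] <;> norm_num
  have hrow : ∀ i, (∑ j : H, Xstar (i, j)) = if i = a then 1 else 0 := by
    intro i
    by_cases hia : i = a
    · subst hia
      simp [hX, Prod.ext_iff]
    · simp [hX, Prod.ext_iff, hia]
  have hcol : ∀ i, (∑ j ∈ Finset.univ.erase i, Xstar (j, i)) =
      if i = b ∧ a ≠ i then 1 else 0 := by
    intro i
    by_cases hib : i = b
    · subst hib
      by_cases hai : a = i
      · simp [hX, Prod.ext_iff, hai]
      · rw [Finset.sum_eq_single a]
        · simp [hX, hai]
        · intro j hj hja; simp [hX, Prod.ext_iff, hja]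
        · intro h; exact absurd (Finset.mem_erase.mpr ⟨hai, Finset.mem_univ a⟩) h
    · simp only [hX, Prod.ext_iff]
      rw [Finset.sum_eq_zero]
      · simp [hib]
      · intro j hj; simp [hib]
  have hXP : Xstar ∈ P := by
    rw [hP]
    refine ⟨?_, ?_, ?_⟩
    · intro i j; simp only [hX]; split <;> norm_num
    · rw [Finset.sum_congr rfl (fun i _ => hrow i)]
      simp
    · intro i
      rw [hrow, hcol]
      by_cases hia : i = a
      · subst hia
        by_cases hib : i = b <;> simp_all
      · by_cases hib : i = b
        · subst hib
          simp [hia, Ne.symm hia, hab.2]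
        · simp [hia, hib, hzge i]
  refine ⟨Xstar, hXP, ?_, ?_⟩
  · intro i j; simp only [hX]; split <;> simp
  · intro X hXmem
    rw [hP] at hXmem
    obtain ⟨hpos, hsum, hcons⟩ := hXmem
    -- key: on the support of X, c (a,b) ≤ c (i,j)
    have key : ∀ i j, c (a, b) * X (i, j) ≤ c (i, j) * X (i, j) := by
      intro i j
      rcases eq_or_lt_of_le (hpos i j) with h0 | h0
      · rw [← h0]; simp
      · -- X (i,j) > 0, so z i = 1 and z j = 1
        have hzi : z i = 1 := by
          rcases hz i with h | h
          · exfalso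
            have h1 : X (i, j) ≤ ∑ j' : H, X (i, j') :=
              Finset.single_le_sum (fun k _ => hpos i k) (Finset.mem_univ j)
            have h2 : (0:ℝ) ≤ ∑ j' ∈ Finset.univ.erase i, X (j', i) :=
              Finset.sum_nonneg (fun k _ => hpos k i)
            have := hcons i
            rw [h] at this
            linarith
          · exact h
        have hzj : z j = 1 := by
          by_cases hij : i = j
          · rw [← hij]; exact hzi
          · rcases hz j with h | h
            · exfalso
              have h1 : X (i, j) ≤ ∑ j' ∈ Finset.univ.erase j, X (j', j) :=
                Finset.single_le_sum (fun k _ => hpos k j)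
                  (Finset.mem_erase.mpr ⟨hij, Finset.mem_univ i⟩)
              have h2 : (0:ℝ) ≤ ∑ j' : H, X (j, j') :=
                Finset.sum_nonneg (fun k _ => hpos j k)
              have := hcons j
              rw [h] at this
              linarith
            · exact h
        have hmem : (i, j) ∈ S := by simp [hS, hzi, hzj]
        exact mul_le_mul_of_nonneg_right (hp₀min (i, j) hmem) (le_of_lt h0)
    have h1 : ∀ i : H, ∑ j : H, c (i, j) * Xstar (i, j) = if i = a then c (i, b) else 0 := by
      intro i
      by_cases hia : i = a
      · subst hia; simp [hX, Prod.ext_iff, mul_ite]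
      · simp [hX, Prod.ext_iff, hia]
    calc ∑ i : H, ∑ j : H, c (i, j) * Xstar (i, j)
        = c (a, b) := by
          rw [Finset.sum_congr rfl fun i _ => h1 i]
          simp
      _ = ∑ i : H, ∑ j : H, c (a, b) * X (i, j) := by
          simp only [← Finset.mul_sum, hsum, mul_one]
      _ ≤ ∑ i : H, ∑ j : H, c (i, j) * X (i, j) :=
          Finset.sum_le_sum (fun i _ => Finset.sum_le_sum (fun j _ => key i j))
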